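/- The algebra A has dimension 4 over F, with basis {1, x_1, x_2, x_2x_1}, and the Lie subalgebra of A (under the commutator bracket [a,b]⁻ := ab − ba) generated by x_1 and x_2 has dimension 2 if q = 1 and dimension 3 if q ≠ 1. -/

import Mathlib

set_option maxHeartbeats 1000000

/-- The defining relations `x₁² = 0`, `x₂² = 0`, `x₁x₂ = q·x₂x₁` of the Nichols algebra
of a two-dimensional braided vector space of diagonal type with `q₁₁ = q₂₂ = −1` and
`q₁₂q₂₁ = 1`. -/
inductive NicholsRel (F : Type*) [Field F] (q : Fˣ) :
    FreeAlgebra F (Fin 2) → FreeAlgebra F (Fin 2) → Prop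
  | sq1 : NicholsRel F q (FreeAlgebra.ι F 0 * FreeAlgebra.ι F 0) 0
  | sq2 : NicholsRel F q (FreeAlgebra.ι F 1 * FreeAlgebra.ι F 1) 0
  | comm : NicholsRel F q (FreeAlgebra.ι F 0 * FreeAlgebra.ι F 1)
      ((q : F) • (FreeAlgebra.ι F 1 * FreeAlgebra.ι F 0))

/-- The algebra `A = F⟨x₁,x₂⟩/(x₁², x₂², x₁x₂ − q·x₂x₁)`. -/
abbrev NicholsAlg (F : Type*) [Field F] (q : Fˣ) := RingQuot (NicholsRel F q)

/-- The images `x₁, x₂` of the generators in `A`. -/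
noncomputable def NicholsX (F : Type*) [Field F] (q : Fˣ) (i : Fin 2) :
    NicholsAlg F q :=
  RingQuot.mkAlgHom F (NicholsRel F q) (FreeAlgebra.ι F i)

attribute [local instance] LieRing.ofAssociativeRing

section helper

variable {F : Type*} [Field F] {A : Type*} [Ring A] [Algebra F A]

lemma lie_mem_span_of (s : Set A)
    (h : ∀ x ∈ s, ∀ y ∈ s, ⁅x, y⁆ ∈ Submodule.span F s) :
    ∀ x ∈ Submodule.span F s, ∀ y ∈ Submodule.span F s, ⁅x, y⁆ ∈ Submodule.span F s := by
  intro x hx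
  induction hx using Submodule.span_induction with
  | mem a ha =>
      intro y hy
      induction hy using Submodule.span_induction with
      | mem b hb => exact h _ ha _ hb
      | zero => simp only [lie_zero]; exact Submodule.zero_mem _
      | add b c _ _ hb hc => rw [lie_add]; exact Submodule.add_mem _ hb hc
      | smul r b _ hb => rw [lie_smul]; exact Submodule.smul_mem _ _ hb
  | zero => intro y hy; simp only [zero_lie]; exact Submodule.zero_mem _
  | add a b _ _ ha hb => intro y hy; rw [add_lie]; exact Submodule.add_mem _ (ha y hy) (hb y hy)
  | smul r a _ ha => intro y hy; rw [smul_lie]; exact Submodule.smul_mem _ _ (ha y hy)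

lemma mul_mem_span_of (s : Set A)
    (h : ∀ x ∈ s, ∀ y ∈ s, x * y ∈ Submodule.span F s) :
    ∀ x ∈ Submodule.span F s, ∀ y ∈ Submodule.span F s, x * y ∈ Submodule.span F s := by
  intro x hx
  induction hx using Submodule.span_induction with
  | mem a ha =>
      intro y hy
      induction hy using Submodule.span_induction with
      | mem b hb => exact h _ ha _ hb
      | zero => simp only [mul_zero]; exact Submodule.zero_mem _
      | add b c _ _ hb hc => rw [mul_add]; exact Submodule.add_mem _ hb hc
      | smul r b _ hb => rw [mul_smul_comm]; exact Submodule.smul_mem _ _ hb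
  | zero => intro y hy; simp only [zero_mul]; exact Submodule.zero_mem _
  | add a b _ _ ha hb => intro y hy; rw [add_mul]; exact Submodule.add_mem _ (ha y hy) (hb y hy)
  | smul r a _ ha => intro y hy; rw [smul_mul_assoc]; exact Submodule.smul_mem _ _ (ha y hy)

end helper

noncomputable def XM1 (F : Type*) [Field F] (q : Fˣ) : Matrix (Fin 4) (Fin 4) F :=
  Matrix.of ![![0,0,0,0], ![1,0,0,0], ![0,0,0,0], ![0,0,(q:F),0]]

noncomputable def XM2 (F : Type*) [Field F] : Matrix (Fin 4) (Fin 4) F :=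
  Matrix.of ![![0,0,0,0], ![0,0,0,0], ![1,0,0,0], ![0,1,0,0]]

section mats
variable {F : Type*} [Field F] (q : Fˣ)

lemma XM1_sq : XM1 F q * XM1 F q = 0 := by
  ext i j
  fin_cases i <;> fin_cases j <;>
    simp [XM1, Matrix.mul_apply, Fin.sum_univ_four, Matrix.vecHead, Matrix.vecTail]

lemma XM2_sq : XM2 F * XM2 F = 0 := by
  ext i j
  fin_cases i <;> fin_cases j <;>
    simp [XM2, Matrix.mul_apply, Fin.sum_univ_four, Matrix.vecHead, Matrix.vecTail]

lemma XM_comm : XM1 F q * XM2 F = (q : F) • (XM2 F * XM1 F q) := by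
  ext i j
  fin_cases i <;> fin_cases j <;>
    simp [XM1, XM2, Matrix.mul_apply, Fin.sum_univ_four, Matrix.vecHead, Matrix.vecTail]

lemma XM_indep : LinearIndependent F
    ![(1 : Matrix (Fin 4) (Fin 4) F), XM1 F q, XM2 F, XM2 F * XM1 F q] := by
  rw [Fintype.linearIndependent_iff]
  intro g hg
  rw [Fin.sum_univ_four] at hg
  have e0 := congrFun (congrFun hg 0) 0
  have e1 := congrFun (congrFun hg 1) 0
  have e2 := congrFun (congrFun hg 2) 0
  have e3 := congrFun (congrFun hg 3) 0
  simp [XM1, XM2, Matrix.mul_apply, Fin.sum_univ_four, Matrix.one_apply,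
    Matrix.vecHead, Matrix.vecTail] at e0 e1 e2 e3
  intro i
  fin_cases i <;> assumption

end mats

section phi
variable {F : Type*} [Field F] (q : Fˣ)

noncomputable def NPhi : NicholsAlg F q →ₐ[F] Matrix (Fin 4) (Fin 4) F :=
  RingQuot.liftAlgHom F ⟨FreeAlgebra.lift F ![XM1 F q, XM2 F], by
    intro a b h
    cases h with
    | sq1 => simp [FreeAlgebra.lift_ι_apply, XM1_sq]
    | sq2 => simp [FreeAlgebra.lift_ι_apply, XM2_sq]
    | comm => simp [FreeAlgebra.lift_ι_apply, XM_comm]⟩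

lemma NPhi_x1 : NPhi q (NicholsX F q 0) = XM1 F q := by
  simp [NPhi, NicholsX, RingQuot.liftAlgHom_mkAlgHom_apply, FreeAlgebra.lift_ι_apply]

lemma NPhi_x2 : NPhi q (NicholsX F q 1) = XM2 F := by
  simp [NPhi, NicholsX, RingQuot.liftAlgHom_mkAlgHom_apply, FreeAlgebra.lift_ι_apply]

lemma Nich_sq1 : NicholsX F q 0 * NicholsX F q 0 = 0 := by
  have := RingQuot.mkAlgHom_rel F (NicholsRel.sq1 (F := F) (q := q))
  simpa [NicholsX] using this

lemma Nich_sq2 : NicholsX F q 1 * NicholsX F q 1 = 0 := by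
  have := RingQuot.mkAlgHom_rel F (NicholsRel.sq2 (F := F) (q := q))
  simpa [NicholsX] using this

lemma Nich_comm : NicholsX F q 0 * NicholsX F q 1 = (q : F) • (NicholsX F q 1 * NicholsX F q 0) := by
  have := RingQuot.mkAlgHom_rel F (NicholsRel.comm (F := F) (q := q))
  simpa [NicholsX] using this

end phi

/-- `A` is 4-dimensional with basis `{1, x₁, x₂, x₂x₁}`, and the Lie subalgebra of `A`
(under the commutator bracket) generated by `x₁, x₂` has dimension `2` if `q = 1` and
dimension `3` if `q ≠ 1`. -/
theorem stmt_16 (F : Type*) [Field F] [CharZero F] (q : Fˣ) :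
    (∃ b : Module.Basis (Fin 4) F (NicholsAlg F q),
        ⇑b = ![1, NicholsX F q 0, NicholsX F q 1,
          NicholsX F q 1 * NicholsX F q 0]) ∧
      Module.finrank F (NicholsAlg F q) = 4 ∧
      ((q : F) = 1 →
        Module.finrank F
          (LieSubalgebra.lieSpan F (NicholsAlg F q)
            {NicholsX F q 0, NicholsX F q 1}) = 2) ∧
      ((q : F) ≠ 1 →
        Module.finrank F
          (LieSubalgebra.lieSpan F (NicholsAlg F q)
            {NicholsX F q 0, NicholsX F q 1}) = 3) := by
  have h11 := Nich_sq1 q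
  have h22 := Nich_sq2 q
  have h12 := Nich_comm q
  set A := NicholsAlg F q with hA
  set x1 := NicholsX F q 0 with hx1def
  set x2 := NicholsX F q 1 with hx2def
  have h121 : x1 * (x2 * x1) = 0 := by
    rw [← mul_assoc, h12, smul_mul_assoc, mul_assoc, h11, mul_zero, smul_zero]
  have h211 : (x2 * x1) * x1 = 0 := by rw [mul_assoc, h11, mul_zero]
  have h221 : x2 * (x2 * x1) = 0 := by rw [← mul_assoc, h22, zero_mul]
  have h212 : (x2 * x1) * x2 = 0 := by
    rw [mul_assoc, h12, mul_smul_comm, ← mul_assoc, h22, zero_mul, smul_zero]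
  have h33 : (x2 * x1) * (x2 * x1) = 0 := by rw [mul_assoc x2 x1, h121, mul_zero]
  set v : Fin 4 → A := ![1, x1, x2, x2 * x1] with hvdef
  -- linear independence of `v`
  have hcomp : (NPhi q).toLinearMap ∘ v = ![1, XM1 F q, XM2 F, XM2 F * XM1 F q] := by
    funext i
    fin_cases i <;>
      simp [hvdef, hx1def, hx2def, NPhi_x1, NPhi_x2, map_one, map_mul]
  have hindep : LinearIndependent F v :=
    LinearIndependent.of_comp (NPhi q).toLinearMap (hcomp ▸ XM_indep q)
  have hm : ∀ k, v k ∈ Submodule.span F (Set.range v) := fun k =>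
    Submodule.subset_span ⟨k, rfl⟩
  -- span is closed under multiplication
  have hbase : ∀ y ∈ Set.range v, ∀ z ∈ Set.range v,
      y * z ∈ Submodule.span F (Set.range v) := by
    rintro _ ⟨i, rfl⟩ _ ⟨j, rfl⟩
    fin_cases i <;> fin_cases j
    · show (1 : A) * 1 ∈ _; rw [one_mul]; exact hm 0
    · show (1 : A) * x1 ∈ _; rw [one_mul]; exact hm 1
    · show (1 : A) * x2 ∈ _; rw [one_mul]; exact hm 2
    · show (1 : A) * (x2 * x1) ∈ _; rw [one_mul]; exact hm 3
    · show x1 * 1 ∈ _; rw [mul_one]; exact hm 1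
    · show x1 * x1 ∈ _; rw [h11]; exact Submodule.zero_mem _
    · show x1 * x2 ∈ _; rw [h12]; exact Submodule.smul_mem _ _ (hm 3)
    · show x1 * (x2 * x1) ∈ _; rw [h121]; exact Submodule.zero_mem _
    · show x2 * 1 ∈ _; rw [mul_one]; exact hm 2
    · show x2 * x1 ∈ _; exact hm 3
    · show x2 * x2 ∈ _; rw [h22]; exact Submodule.zero_mem _
    · show x2 * (x2 * x1) ∈ _; rw [h221]; exact Submodule.zero_mem _
    · show (x2 * x1) * 1 ∈ _; rw [mul_one]; exact hm 3
    · show (x2 * x1) * x1 ∈ _; rw [h211]; exact Submodule.zero_mem _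
    · show (x2 * x1) * x2 ∈ _; rw [h212]; exact Submodule.zero_mem _
    · show (x2 * x1) * (x2 * x1) ∈ _; rw [h33]; exact Submodule.zero_mem _
  have hmul := mul_mem_span_of (F := F) (Set.range v) hbase
  have hspan : Submodule.span F (Set.range v) = ⊤ := by
    rw [eq_top_iff]
    rintro a -
    obtain ⟨p, rfl⟩ := RingQuot.mkAlgHom_surjective F (NicholsRel F q) a
    induction p using FreeAlgebra.induction with
    | grade0 r =>
        rw [AlgHom.commutes, Algebra.algebraMap_eq_smul_one]
        exact Submodule.smul_mem _ _ (hm 0)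
    | grade1 i =>
        fin_cases i
        · exact hm 1
        · exact hm 2
    | mul a b ha hb => rw [map_mul]; exact hmul _ ha _ hb
    | add a b ha hb => rw [map_add]; exact Submodule.add_mem _ ha hb
  let hB : Module.Basis (Fin 4) F A := Module.Basis.mk hindep (by rw [hspan])
  have hBcoe : ⇑hB = v := Module.Basis.coe_mk _ _
  -- brackets
  have hbr : ⁅x1, x2⁆ = ((q : F) - 1) • (x2 * x1) := by
    rw [Ring.lie_def, h12]; module
  have hbr13 : ⁅x1, x2 * x1⁆ = 0 := by rw [Ring.lie_def, h121, h211, sub_zero]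
  have hbr23 : ⁅x2, x2 * x1⁆ = 0 := by rw [Ring.lie_def, h221, h212, sub_zero]
  refine ⟨⟨hB, hBcoe⟩, ?_, ?_, ?_⟩
  · rw [Module.finrank_eq_card_basis hB, Fintype.card_fin]
  · -- q = 1
    intro hq1
    have hz : ⁅x1, x2⁆ = 0 := by rw [hbr, hq1, sub_self, zero_smul]
    have hb0 : ∀ y ∈ ({x1, x2} : Set A), ∀ z ∈ ({x1, x2} : Set A),
        ⁅y, z⁆ ∈ Submodule.span F ({x1, x2} : Set A) := by
      rintro y (rfl | rfl) z (rfl | rfl)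
      · rw [lie_self]; exact Submodule.zero_mem _
      · rw [hz]; exact Submodule.zero_mem _
      · rw [← lie_skew, hz, neg_zero]; exact Submodule.zero_mem _
      · rw [lie_self]; exact Submodule.zero_mem _
    set K : LieSubalgebra F A :=
      { Submodule.span F ({x1, x2} : Set A) with
        lie_mem' := fun {y z} hy hz => lie_mem_span_of _ hb0 y hy z hz } with hKdef
    have hKspan : LieSubalgebra.lieSpan F A {x1, x2} = K := by
      apply le_antisymm
      · rw [LieSubalgebra.lieSpan_le]
        exact Submodule.subset_span
      · intro y hy
        exact Submodule.span_le.mpr (LieSubalgebra.subset_lieSpan) hy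
    rw [hKspan]
    have hsr : ({x1, x2} : Set A) = Set.range ![x1, x2] := by
      ext z; simp [Matrix.range_cons, Matrix.range_empty]; tauto
    have hli2 : LinearIndependent F ![x1, x2] := by
      have h := hindep.comp ![1, 2] (by decide)
      have : v ∘ ![1, 2] = ![x1, x2] := by
        funext i; fin_cases i <;> rfl
      rwa [this] at h
    have : Module.finrank F (K : Submodule F A) = 2 := by
      show Module.finrank F (Submodule.span F ({x1, x2} : Set A)) = 2
      rw [hsr, finrank_span_eq_card hli2, Fintype.card_fin]
    exact this
  · -- q ≠ 1
    intro hq1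
    have hne : (q : F) - 1 ≠ 0 := sub_ne_zero.mpr hq1
    have hb0 : ∀ y ∈ ({x1, x2, x2 * x1} : Set A), ∀ z ∈ ({x1, x2, x2 * x1} : Set A),
        ⁅y, z⁆ ∈ Submodule.span F ({x1, x2, x2 * x1} : Set A) := by
      have m3 : x2 * x1 ∈ Submodule.span F ({x1, x2, x2 * x1} : Set A) :=
        Submodule.subset_span (by simp)
      rintro y (rfl | rfl | rfl) z (rfl | rfl | rfl)
      · rw [lie_self]; exact Submodule.zero_mem _
      · rw [hbr]; exact Submodule.smul_mem _ _ m3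
      · rw [hbr13]; exact Submodule.zero_mem _
      · rw [← lie_skew, hbr]; exact Submodule.neg_mem _ (Submodule.smul_mem _ _ m3)
      · rw [lie_self]; exact Submodule.zero_mem _
      · rw [hbr23]; exact Submodule.zero_mem _
      · rw [← lie_skew, hbr13, neg_zero]; exact Submodule.zero_mem _
      · rw [← lie_skew, hbr23, neg_zero]; exact Submodule.zero_mem _
      · rw [lie_self]; exact Submodule.zero_mem _
    set K : LieSubalgebra F A :=
      { Submodule.span F ({x1, x2, x2 * x1} : Set A) with
        lie_mem' := fun {y z} hy hz => lie_mem_span_of _ hb0 y hy z hz } with hKdef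
    have hKspan : LieSubalgebra.lieSpan F A {x1, x2} = K := by
      apply le_antisymm
      · rw [LieSubalgebra.lieSpan_le]
        intro y hy
        exact Submodule.subset_span (by rcases hy with rfl | rfl <;> simp)
      · intro y hy
        have hmx1 : x1 ∈ LieSubalgebra.lieSpan F A {x1, x2} :=
          LieSubalgebra.subset_lieSpan (by simp)
        have hmx2 : x2 ∈ LieSubalgebra.lieSpan F A {x1, x2} :=
          LieSubalgebra.subset_lieSpan (by simp)
        have hm3 : x2 * x1 ∈ LieSubalgebra.lieSpan F A {x1, x2} := by
          have hmem : ⁅x1, x2⁆ ∈ LieSubalgebra.lieSpan F A {x1, x2} :=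
            LieSubalgebra.lie_mem _ hmx1 hmx2
          have heq : x2 * x1 = ((q : F) - 1)⁻¹ • ⁅x1, x2⁆ := by
            rw [hbr, smul_smul, inv_mul_cancel₀ hne, one_smul]
          rw [heq]
          exact LieSubalgebra.smul_mem _ _ hmem
        refine Submodule.span_le.mpr ?_ hy
        rintro z (rfl | rfl | rfl)
        · exact hmx1
        · exact hmx2
        · exact hm3
    rw [hKspan]
    have hsr : ({x1, x2, x2 * x1} : Set A) = Set.range ![x1, x2, x2 * x1] := by
      ext z; simp [Matrix.range_cons, Matrix.range_empty]; tauto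
    have hli3 : LinearIndependent F ![x1, x2, x2 * x1] := by
      have h := hindep.comp ![1, 2, 3] (by decide)
      have : v ∘ ![1, 2, 3] = ![x1, x2, x2 * x1] := by
        funext i; fin_cases i <;> rfl
      rwa [this] at h
    have : Module.finrank F (K : Submodule F A) = 3 := by
      show Module.finrank F (Submodule.span F ({x1, x2, x2 * x1} : Set A)) = 3
      rw [hsr, finrank_span_eq_card hli3, Fintype.card_fin]
    exact this
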